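/- Let M be an X-graded module over a ring, with each graded piece M_λ finite dimensional over a field k, and suppose M is generated (as a module) by the finite-dimensional sum of graded pieces over a finite set B ⊆ X. Then any graded endomorphism f of M admits a Fitting decomposition: there exists n > 0 with M = im(fⁿ) ⊕ ker(fⁿ). -/

import Mathlib

/-- Fitting's lemma in the modular category O: let `M` be an `X`-graded module over a
`k`-algebra `R` (the hyperalgebra), with each graded piece (weight space) `g λ` finite
dimensional over the field `k`, and suppose `M` is generated as an `R`-module by the
sum of the graded pieces over a finite set `B ⊆ X`.  Then any graded `R`-module
endomorphism `f` of `M` admits a Fitting decomposition: there is `n > 0` with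
`M = im (fⁿ) ⊕ ker (fⁿ)`. -/
theorem stmt4 {k R M X : Type*} [DecidableEq X] [Field k] [Ring R] [Algebra k R]
    [AddCommGroup M] [Module k M] [Module R M] [IsScalarTower k R M]
    (g : X → Submodule k M) (hint : DirectSum.IsInternal g)
    (hfin : ∀ lam : X, FiniteDimensional k (g lam))
    (B : Finset X)
    (hgen : Submodule.span R (⋃ lam ∈ B, (g lam : Set M)) = ⊤)
    (f : Module.End R M) (hf : ∀ lam : X, ∀ x ∈ g lam, f x ∈ g lam) :
    ∃ n : ℕ, 0 < n ∧ IsCompl (LinearMap.range (f ^ n)) (LinearMap.ker (f ^ n)) := by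
  classical
  haveI : ∀ lam, FiniteDimensional k (g lam) := hfin
  set fk : M →ₗ[k] M := f.restrictScalars k with hfkdef
  have hfk : ∀ x : M, fk x = f x := fun x => rfl
  have hpow : ∀ (m : ℕ) (x : M), (fk ^ m) x = (f ^ m) x := by
    intro m
    induction m with
    | zero => intro x; simp
    | succ m ih =>
      intro x
      rw [pow_succ, pow_succ, Module.End.mul_apply, Module.End.mul_apply, ih, hfk]
  -- the finite-dimensional generating subspace
  set NB : Submodule k M := B.sup g with hNBdef
  have hgNB : ∀ lam ∈ B, g lam ≤ NB := fun lam h => Finset.le_sup h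
  have hNBinv : ∀ x ∈ NB, fk x ∈ NB := by
    have hmap : Submodule.map fk NB ≤ NB := by
      rw [hNBdef, Finset.sup_eq_iSup, Submodule.map_iSup (ι := X),
        iSup_le_iff]
      intro lam
      simp_rw [Submodule.map_iSup (ι := lam ∈ B)]
      refine iSup_le fun hlam => ?_
      refine le_trans ?_ (le_iSup₂ (f := fun lam _ => g lam) lam hlam)
      rw [Submodule.map_le_iff_le_comap]
      intro x hx
      exact hf lam x hx
    intro x hx
    exact hmap (Submodule.mem_map_of_mem hx)
  set fN : NB →ₗ[k] NB := fk.restrict hNBinv with hfNdef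
  have hfNcomm : ∀ (m : ℕ) (x : NB), ((fN ^ m) x : M) = (fk ^ m) (x : M) := by
    intro m
    induction m with
    | zero => intro x; simp
    | succ m ih =>
      intro x
      rw [pow_succ, pow_succ, Module.End.mul_apply, Module.End.mul_apply]
      rw [ih]
      rfl
  haveI : FiniteDimensional k NB := by
    rw [hNBdef]; infer_instance
  obtain ⟨n0, hn0⟩ := IsArtinian.monotone_stabilizes fN.iterateRange
  have hrangeN : ∀ m, n0 ≤ m →
      LinearMap.range (fN ^ n0) = LinearMap.range (fN ^ m) := by
    intro m hm
    exact hn0 m hm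
  -- transport to maps of NB inside M
  have hmapN : ∀ m : ℕ, Submodule.map (fk ^ m) NB
      = Submodule.map NB.subtype (LinearMap.range (fN ^ m)) := by
    intro m
    ext z
    constructor
    · rintro ⟨y, hy, rfl⟩
      exact ⟨(fN ^ m) ⟨y, hy⟩, ⟨⟨y, hy⟩, rfl⟩, (hfNcomm m ⟨y, hy⟩)⟩
    · rintro ⟨w, ⟨v, rfl⟩, rfl⟩
      exact ⟨(v : M), v.2, (hfNcomm m v).symm⟩
  have hstab : ∀ m, n0 ≤ m →
      Submodule.map (fk ^ m) NB = Submodule.map (fk ^ n0) NB := by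
    intro m hm
    rw [hmapN, hmapN, hrangeN m hm]
  -- global range description via generation
  set S : Set M := ⋃ lam ∈ B, (g lam : Set M) with hSdef
  have hSsub : S ⊆ (NB : Set M) := by
    intro x hx
    rw [hSdef] at hx
    simp only [Set.mem_iUnion] at hx
    obtain ⟨lam, hlam, hx⟩ := hx
    exact hgNB lam hlam hx
  have hrange_span : ∀ m : ℕ,
      LinearMap.range (f ^ m) = Submodule.span R ((f ^ m) '' S) := by
    intro m
    rw [← Submodule.map_top, ← hgen, Submodule.map_span]
  have hrange_le : ∀ a b : ℕ, a ≤ b →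
      LinearMap.range (f ^ b) ≤ LinearMap.range (f ^ a) := by
    intro a b hab
    rw [show b = a + (b - a) by omega, pow_add]
    rintro z ⟨y, rfl⟩
    exact ⟨(f ^ (b - a)) y, rfl⟩
  have hrange_stab : ∀ m, n0 ≤ m →
      LinearMap.range (f ^ m) = LinearMap.range (f ^ n0) := by
    intro m hm
    refine le_antisymm (hrange_le n0 m hm) ?_
    rw [hrange_span n0, Submodule.span_le]
    rintro z ⟨x, hxS, rfl⟩
    have h1 : (fk ^ n0) x ∈ Submodule.map (fk ^ n0) NB :=
      Submodule.mem_map_of_mem (hSsub hxS)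
    rw [← hstab m hm] at h1
    obtain ⟨y, _, hy2⟩ := h1
    refine ⟨y, ?_⟩
    rw [← hpow, hy2, hpow]
  -- the Fitting exponent
  set n : ℕ := n0 + 1 with hndef
  have hn_pos : 0 < n := Nat.succ_pos n0
  have hr : ∀ m, n ≤ m → LinearMap.range (f ^ m) = LinearMap.range (f ^ n) := by
    intro m hm
    rw [hrange_stab m (by omega), hrange_stab n (by omega)]
  refine ⟨n, hn_pos, ?_, ?_⟩
  · -- Disjointness
    rw [Submodule.disjoint_def]
    intro x hxr hxk
    -- the direct sum decomposition
    set D : (DirectSum X fun lam => ↥(g lam)) ≃ₗ[k] M :=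
      LinearEquiv.ofBijective (DirectSum.coeLinearMap g) hint with hDdef
    have hD : ∀ u : DirectSum X fun lam => ↥(g lam), D u = DirectSum.coeLinearMap g u := fun u => rfl
    -- restrictions of f to the graded pieces
    set fg : ∀ lam, g lam →ₗ[k] g lam := fun lam => fk.restrict (hf lam) with hfgdef
    have hkey : ∀ (u : DirectSum X fun lam => ↥(g lam)) (lam : X),
        D.symm (fk (DirectSum.coeLinearMap g u)) lam = fg lam (u lam) := by
      intro u
      induction u using DirectSum.induction_on with
      | zero => intro lam; simp
      | of j c =>
        intro lam
        rw [DirectSum.coeLinearMap_of]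
        by_cases hj : lam = j
        · subst hj
          rw [DirectSum.of_eq_same]
          exact hint.ofBijective_coeLinearMap_of_mem (hf lam c c.2)
        · rw [DirectSum.of_eq_of_ne _ _ _ hj, map_zero]
          exact hint.ofBijective_coeLinearMap_of_mem_ne (Ne.symm hj) (hf j c c.2)
      | add u v hu hv =>
        intro lam
        rw [map_add, map_add, map_add, DirectSum.add_apply, DirectSum.add_apply,
          map_add, hu lam, hv lam]
    have hbase : ∀ (y : M) (lam : X), D.symm (f y) lam = fg lam (D.symm y lam) := by
      intro y lam
      have := hkey (D.symm y) lam
      rwa [← hD, D.apply_symm_apply, hfk] at this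
    have hcomp : ∀ (m : ℕ) (y : M) (lam : X),
        D.symm ((f ^ m) y) lam = (fg lam ^ m) (D.symm y lam) := by
      intro m
      induction m with
      | zero => intro y lam; simp
      | succ m ih =>
        intro y lam
        rw [pow_succ', pow_succ', Module.End.mul_apply, Module.End.mul_apply,
          hbase, ih]
    suffices hzero : D.symm x = 0 by
      have := congrArg D hzero
      rwa [D.apply_symm_apply, map_zero] at this
    refine DFinsupp.ext fun lam => ?_
    haveI : IsNoetherian k (g lam) := inferInstance
    obtain ⟨m0, hm0⟩ := Filter.eventually_atTop.mp
      (Module.End.eventually_disjoint_ker_pow_range_pow (fg lam))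
    set m : ℕ := max n m0 with hmdef
    have hc_ker : (fg lam ^ m) (D.symm x lam) = 0 := by
      have hxkm : (f ^ m) x = 0 := by
        rw [show m = (m - n) + n by omega, pow_add, Module.End.mul_apply, hxk,
          map_zero]
      have := hcomp m x lam
      rw [hxkm, map_zero] at this
      simpa using this.symm
    have hc_range : D.symm x lam ∈ LinearMap.range (fg lam ^ m) := by
      have hxrm : x ∈ LinearMap.range (f ^ m) := by
        rw [hr m (le_max_left _ _)]; exact hxr
      obtain ⟨y, rfl⟩ := hxrm
      exact ⟨D.symm y lam, (hcomp m y lam).symm⟩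
    have hdisj := hm0 m (le_max_right _ _)
    have : D.symm x lam = 0 :=
      (Submodule.disjoint_def.mp hdisj) _ (by simpa using hc_ker) hc_range
    simpa using this
  · -- Codisjointness
    rw [codisjoint_iff, eq_top_iff]
    intro x _
    have h2 : (f ^ n) x ∈ LinearMap.range (f ^ (n + n)) := by
      rw [hr (n + n) (by omega)]
      exact ⟨x, rfl⟩
    obtain ⟨y, hy⟩ := h2
    refine Submodule.mem_sup.mpr ⟨(f ^ n) y, ⟨y, rfl⟩, x - (f ^ n) y, ?_, by abel⟩
    rw [LinearMap.mem_ker, map_sub, ← Module.End.mul_apply, ← pow_add, hy,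
      sub_self]
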